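/- Let {mᵏ}ₖ≥₀ be summable nonnegative reals, η ∈ (0,1), and α̲ > 0. Suppose a sequence {αᵏ}ₖ≥₋₁ of positive reals satisfies αᵏ ≥ α̲ for all k, and there is an infinite set D ⊆ ℕ of 'decrease times' such that for each k ∈ D, (αᵏ)² ≤ η²((αᵏ⁻¹)² + mᵏ), while for all k, (αᵏ)² ≤ (αᵏ⁻¹)² + mᵏ. If furthermore there exists K with ∑_{t≥K} mᵗ < ((1−η²)/2)·α̲², then D ∩ [K, ∞) induces a strict contraction: for every k ∈ D with k ≥ K and every k' ≥ k, (α^{k'})² ≤ ((1+η²)/2)·(α^{k−1})². Consequently D is finite, contradicting the assumption; hence no such sequence has infinitely many decrease times. -/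

import Mathlib

/-- core contradiction argument of the finite-time min-consensus proof.
Here `α (k+1)` plays the role of `αᵏ` (so `α k` is `αᵏ⁻¹`). If stepsizes are bounded
below by `αlow > 0`, increase by at most a summable budget `m k`, and `D` is the set of
decrease times (each contracting by `η² < 1`), then whenever the tail
`∑_{t ≥ K} m t < ((1−η²)/2)·αlow²`, every drop at `k ∈ D` with `k ≥ K` forces
`(α^{k'})² ≤ ((1+η²)/2)(α^{k−1})²` for all `k' ≥ k`; consequently `D` is finite. -/
theorem stmt10 (η αlow : ℝ) (hη0 : 0 < η) (hη1 : η < 1) (hαlow : 0 < αlow)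
    (α : ℕ → ℝ) (msq : ℕ → ℝ)
    (hαpos : ∀ k, 0 < α k) (hα : ∀ k, αlow ≤ α k)
    (hm : ∀ k, 0 ≤ msq k) (hsum : Summable msq)
    (hinc : ∀ k, (α (k + 1)) ^ 2 ≤ (α k) ^ 2 + msq k)
    (D : Set ℕ)
    (hdec : ∀ k ∈ D, (α (k + 1)) ^ 2 ≤ η ^ 2 * ((α k) ^ 2 + msq k))
    (K : ℕ) (htail : (∑' t : ℕ, msq (K + t)) < (1 - η ^ 2) / 2 * αlow ^ 2) :
    (∀ k ∈ D, K ≤ k → ∀ k', k ≤ k' →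
      (α (k' + 1)) ^ 2 ≤ (1 + η ^ 2) / 2 * (α k) ^ 2) ∧
    D.Finite := by
  have hη2 : η ^ 2 < 1 := by nlinarith
  have hsum' : Summable (fun t => msq (K + t)) := by
    have := (summable_nat_add_iff (f := msq) K).mpr hsum
    simpa [add_comm] using this
  have key : ∀ k ∈ D, K ≤ k → ∀ k', k ≤ k' →
      (α (k' + 1)) ^ 2 ≤ (1 + η ^ 2) / 2 * (α k) ^ 2 := by
    intro k hk hKk k' hkk'
    have claim : (α (k' + 1)) ^ 2 ≤ η ^ 2 * (α k) ^ 2 + ∑ t ∈ Finset.Icc k k', msq t := by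
      induction k', hkk' using Nat.le_induction with
      | base =>
        have h := hdec k hk
        rw [Finset.Icc_self, Finset.sum_singleton]
        nlinarith [hm k]
      | succ n hn ih =>
        have h1 := hinc (n + 1)
        rw [Finset.sum_Icc_succ_top (le_trans hn (Nat.le_succ n))]
        linarith
    have hbound : ∑ t ∈ Finset.Icc k k', msq t ≤ ∑' t : ℕ, msq (K + t) := by
      have h1 : ∑ t ∈ Finset.Icc k k', msq t ≤ ∑ t ∈ Finset.Icc K k', msq t :=
        Finset.sum_le_sum_of_subset_of_nonneg
          (Finset.Icc_subset_Icc_left hKk) (fun i _ _ => hm i)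
      have h2 : ∑ t ∈ Finset.Icc K k', msq t = ∑ t ∈ Finset.range (k' + 1 - K), msq (K + t) := by
        rw [← Finset.Ico_add_one_right_eq_Icc, Finset.sum_Ico_eq_sum_range]
      have h3 : ∑ t ∈ Finset.range (k' + 1 - K), msq (K + t) ≤ ∑' t : ℕ, msq (K + t) :=
        Summable.sum_le_tsum _ (fun i _ => hm _) hsum'
      linarith
    have hα2 : αlow ^ 2 ≤ (α k) ^ 2 := by nlinarith [hα k, hαpos k]
    nlinarith
  refine ⟨key, ?_⟩
  by_contra hcon
  have hinf : D.Infinite := hcon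
  obtain ⟨g, hg⟩ : ∃ g : ℕ → ℕ, ∀ a, g a ∈ D ∧ a < g a := by
    choose g h1 h2 using hinf.exists_gt
    exact ⟨g, fun a => ⟨h1 a, h2 a⟩⟩
  set f : ℕ → ℕ := fun n => g^[n] (g K) with hf
  have hf0 : f 0 = g K := rfl
  have hfs : ∀ n, f (n + 1) = g (f n) := fun n => Function.iterate_succ_apply' g n (g K)
  have hmem : ∀ n, f n ∈ D ∧ K ≤ f n := by
    intro n
    induction n with
    | zero => exact ⟨(hg K).1, (hg K).2.le⟩
    | succ n ih =>
      rw [hfs]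
      exact ⟨(hg (f n)).1, le_trans ih.2 (hg (f n)).2.le⟩
  have hlt : ∀ n, f n < f (n + 1) := by
    intro n; rw [hfs]; exact (hg (f n)).2
  set c : ℝ := (1 + η ^ 2) / 2 with hc
  have hc0 : 0 < c := by positivity
  have hc1 : c < 1 := by rw [hc]; linarith
  have hstep : ∀ n, (α (f (n + 1))) ^ 2 ≤ c * (α (f n)) ^ 2 := by
    intro n
    have h1 : f n ≤ f (n + 1) - 1 := Nat.le_sub_one_of_lt (hlt n)
    have h2 : f (n + 1) - 1 + 1 = f (n + 1) :=
      Nat.succ_pred_eq_of_pos (Nat.lt_of_le_of_lt (Nat.zero_le _) (hlt n))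
    have := key (f n) (hmem n).1 (hmem n).2 (f (n + 1) - 1) h1
    rwa [h2] at this
  have hgeo : ∀ n, (α (f n)) ^ 2 ≤ c ^ n * (α (f 0)) ^ 2 := by
    intro n
    induction n with
    | zero => simp
    | succ n ih =>
      calc (α (f (n + 1))) ^ 2 ≤ c * (α (f n)) ^ 2 := hstep n
        _ ≤ c * (c ^ n * (α (f 0)) ^ 2) := by nlinarith
        _ = c ^ (n + 1) * (α (f 0)) ^ 2 := by ring
  obtain ⟨n, hn⟩ := exists_pow_lt_of_lt_one
    (div_pos (pow_pos hαlow 2) (pow_pos (hαpos (f 0)) 2)) hc1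
  have hfn2 : αlow ^ 2 ≤ (α (f n)) ^ 2 := by nlinarith [hα (f n), hαpos (f n)]
  have h0 : (0:ℝ) < (α (f 0)) ^ 2 := pow_pos (hαpos _) 2
  have : c ^ n * (α (f 0)) ^ 2 < αlow ^ 2 := by
    rw [div_eq_mul_inv] at hn
    calc c ^ n * (α (f 0)) ^ 2 < (αlow ^ 2 * ((α (f 0)) ^ 2)⁻¹) * (α (f 0)) ^ 2 := by
          exact mul_lt_mul_of_pos_right hn h0
      _ = αlow ^ 2 := by rw [mul_assoc, inv_mul_cancel₀ h0.ne', mul_one]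
  linarith [hgeo n]
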